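/- Saturation of the SINR under linearly dependent estimates: with Z, h₁, h₂ = η^{-1}h₁ as above, the quantity γ = h₁ᴴ(h₂h₂ᴴ + Z)^{-1}h₁ satisfies γ < η², i.e., it is bounded above by η² regardless of M, Z, and h₁. -/

import Mathlib

open Matrix
open scoped ComplexOrder

lemma quad_entry {M : ℕ} (B : Matrix (Fin M) (Fin M) ℂ) (h : Matrix (Fin M) (Fin 1) ℂ) :
    (hᴴ * B * h) 0 0 = star (fun i => h i 0) ⬝ᵥ (B *ᵥ fun i => h i 0) := by
  simp only [Matrix.mul_apply, Matrix.conjTranspose_apply, dotProduct, Matrix.mulVec,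
    Finset.sum_mul, Finset.mul_sum, Pi.star_apply]
  rw [Finset.sum_comm]
  exact Finset.sum_congr rfl fun i _ => Finset.sum_congr rfl fun j _ => by ring

lemma col_ne_zero {M : ℕ} {h : Matrix (Fin M) (Fin 1) ℂ} (hh : h ≠ 0) :
    (fun i => h i 0) ≠ 0 := by
  intro hx
  apply hh
  ext i j
  have : j = 0 := Subsingleton.elim _ _
  subst this
  simpa using congrFun hx i

/-- Saturation of the SINR under linearly dependent estimates: for `Z` Hermitian
positive definite, `η` real nonzero, `h₁ ≠ 0` and `h₂ = η⁻¹ h₁`, the quantity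
`γ = h₁ᴴ(h₂h₂ᴴ + Z)⁻¹h₁` satisfies `γ < η²`, regardless of `M`, `Z` and `h₁`. -/
theorem sinr_saturation {M : ℕ}
    (Z : Matrix (Fin M) (Fin M) ℂ) (hZ : Z.PosDef)
    (η : ℝ) (hη : η ≠ 0)
    (h₁ h₂ : Matrix (Fin M) (Fin 1) ℂ) (hne : h₁ ≠ 0)
    (hdep : h₂ = ((η : ℂ))⁻¹ • h₁) :
    ((h₁ᴴ * (h₂ * h₂ᴴ + Z)⁻¹ * h₁) 0 0).re < η ^ 2 := by
  have hη' : (η : ℂ) ≠ 0 := by exact_mod_cast hη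
  have hh₁ : h₁ = (η : ℂ) • h₂ := by rw [hdep, smul_smul, mul_inv_cancel₀ hη', one_smul]
  have hh₂ : h₂ ≠ 0 := by
    intro h
    apply hne
    rw [hh₁, h, smul_zero]
  set A : Matrix (Fin M) (Fin M) ℂ := h₂ * h₂ᴴ + Z with hAdef
  have hApos : A.PosDef :=
    Matrix.PosDef.posSemidef_add (Matrix.posSemidef_self_mul_conjTranspose h₂) hZ
  have hAinv : A⁻¹.PosDef := hApos.inv
  have hAmul : A * A⁻¹ = 1 :=
    Matrix.mul_nonsing_inv A (Matrix.isUnit_iff_isUnit_det A |>.mp hApos.isUnit)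
  set u : Matrix (Fin M) (Fin 1) ℂ := A⁻¹ * h₂ with hudef
  have hu : A * u = h₂ := by rw [hudef, ← Matrix.mul_assoc, hAmul, Matrix.one_mul]
  have hune : u ≠ 0 := by
    intro h
    apply hh₂
    rw [← hu, h, Matrix.mul_zero]
  set s : ℂ := (h₂ᴴ * A⁻¹ * h₂) 0 0 with hsdef
  have hspos : 0 < s := by
    rw [hsdef, quad_entry]
    exact hAinv.dotProduct_mulVec_pos (col_ne_zero hh₂)
  have hsre : 0 < s.re := (Complex.lt_def.mp hspos).1
  have hsim : s.im = 0 := ((Complex.lt_def.mp hspos).2).symm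
  have hZu : Z * u = h₂ - h₂ * (h₂ᴴ * u) := by
    have h0 : h₂ * (h₂ᴴ * u) + Z * u = h₂ := by
      rw [← Matrix.mul_assoc, ← Matrix.add_mul, ← hAdef, hu]
    linear_combination (norm := abel) h0
  have htpos : (0 : ℂ) < (uᴴ * Z * u) 0 0 := by
    rw [quad_entry]
    exact hZ.dotProduct_mulVec_pos (col_ne_zero hune)
  have hs2 : (h₂ᴴ * u) 0 0 = s := by rw [hsdef, hudef, Matrix.mul_assoc]
  have hcs : (uᴴ * h₂) 0 0 = star s := by
    rw [← hs2]
    simp [Matrix.mul_apply, Matrix.conjTranspose_apply, mul_comm]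
  have hone : ∀ P Q : Matrix (Fin 1) (Fin 1) ℂ, (P * Q) 0 0 = P 0 0 * Q 0 0 := by
    intro P Q; simp [Matrix.mul_apply]
  have ht : (uᴴ * Z * u) 0 0 = star s - star s * s := by
    rw [Matrix.mul_assoc, hZu, Matrix.mul_sub, Matrix.sub_apply, ← Matrix.mul_assoc,
      hone, hcs, hs2]
  have htre : 0 < s.re - s.re * s.re := by
    have h1 := (Complex.lt_def.mp htpos).1
    rw [ht] at h1
    simpa [Complex.sub_re, Complex.mul_re, hsim] using h1
  have hslt : s.re < 1 := by nlinarith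
  have hγ : (h₁ᴴ * A⁻¹ * h₁) 0 0 = (η : ℂ) ^ 2 * s := by
    rw [hh₁]
    simp only [Matrix.conjTranspose_smul, Matrix.smul_mul, Matrix.mul_smul,
      Matrix.smul_apply, smul_eq_mul, starRingEnd_apply]
    rw [← hsdef, Complex.star_def, Complex.conj_ofReal]
    ring
  rw [hγ]
  have hre : ((η : ℂ) ^ 2 * s).re = η ^ 2 * s.re := by
    simp [Complex.mul_re, hsim, ← Complex.ofReal_pow]
  rw [hre]
  have hη2 : 0 < η ^ 2 := by positivity
  nlinarith
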